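/- The function G(t) = ∑_{n=1}^∞ n^{-1/2-it} · t/(2πn² + t), initially defined for real t, extends to a meromorphic function on ℂ whose poles are contained in the set {(2k - 1/2)i : k ∈ ℤ, k ≥ 1} ∪ {-2πn² : n ∈ ℤ, n ≥ 1}. -/

import Mathlib

open Complex Real

/-- The poles of the meromorphic continuation of `G`:
`{(2k-1/2)i : k ≥ 1} ∪ {-2πn² : n ≥ 1}`. -/
def GPoles : Set ℂ :=
  {z : ℂ | ∃ k : ℕ, 1 ≤ k ∧ z = (2 * k - 1 / 2) * I} ∪
    {z : ℂ | ∃ n : ℕ, 1 ≤ n ∧ z = -2 * π * n ^ 2}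

open Filter Topology

noncomputable section GAux

/-- the zeta argument -/
def Sarg (j : ℕ) (z : ℂ) : ℂ := 1/2 + 2*(j:ℂ) + I*z

/-- partial sum of the Dirichlet series -/
def Ppart (N : ℕ) (s : ℂ) : ℂ := ∑ n ∈ Finset.range N, ((n:ℂ)+1) ^ (-s)

/-- the `j`-th term of the expansion (index shifted: actual index is `j+1`) -/
def Tj (N j : ℕ) (z : ℂ) : ℂ :=
  (-1)^j * (z/(2*(π:ℂ)))^(j+1) * (riemannZeta (Sarg (j+1) z) - Ppart N (Sarg (j+1) z))

/-- head part: first `N` terms of the original series -/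
def FN (N : ℕ) (z : ℂ) : ℂ :=
  ∑ n ∈ Finset.range N, ((n:ℂ)+1) ^ (-(1/2:ℂ) - I*z) * (z / (2*(π:ℂ)*((n:ℂ)+1)^2 + z))

/-- the `N`-th continuation -/
def GN (N : ℕ) (z : ℂ) : ℂ := FN N z + ∑' j : ℕ, Tj N j z

/-- the glued global function -/
def Gc (z : ℂ) : ℂ := GN (⌈‖z‖⌉₊ + 1) z

/-- comparison constant -/
def Csum : ℝ := ∑' n : ℕ, ((n:ℝ)+1) ^ (-(2:ℝ))

end GAux

lemma Sarg_re (j : ℕ) (z : ℂ) : (Sarg j z).re = 1/2 + 2*j - z.im := by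
  simp [Sarg]; ring

lemma summable_rpow_shift {σ : ℝ} (hσ : 1 < σ) :
    Summable (fun n : ℕ => ((n:ℝ)+1) ^ (-σ)) := by
  have h := (Real.summable_one_div_nat_rpow (p := σ)).mpr hσ
  have h2 := (summable_nat_add_iff 1).mpr h
  refine h2.congr fun n => ?_
  rw [one_div, ← Real.rpow_neg (by positivity)]
  push_cast
  ring_nf

lemma norm_cpow_nat (m : ℕ) (s : ℂ) :
    ‖((m:ℂ)+1) ^ (-s)‖ = ((m:ℝ)+1) ^ (-s.re) := by
  have : ((m:ℂ)+1) = (((m:ℝ)+1 : ℝ) : ℂ) := by push_cast; ring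
  rw [this, Complex.norm_cpow_eq_rpow_re_of_pos (by positivity)]
  simp

lemma summable_cpow_neg {s : ℂ} (hs : 1 < s.re) :
    Summable (fun n : ℕ => ((n:ℂ)+1) ^ (-s)) := by
  refine Summable.of_norm ?_
  simp only [norm_cpow_nat]
  exact summable_rpow_shift hs

lemma zeta_sub_Ppart (N : ℕ) {s : ℂ} (hs : 1 < s.re) :
    riemannZeta s - Ppart N s = ∑' n : ℕ, ((n:ℂ) + (N:ℂ) + 1) ^ (-s) := by
  have hz : riemannZeta s = ∑' n : ℕ, ((n:ℂ)+1) ^ (-s) := by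
    rw [zeta_eq_tsum_one_div_nat_add_one_cpow hs]
    congr 1; funext n
    rw [Complex.cpow_neg, one_div]
  have hsum := summable_cpow_neg hs
  have := Summable.sum_add_tsum_nat_add (f := fun n : ℕ => ((n:ℂ)+1) ^ (-s)) N hsum
  rw [hz, ← this, Ppart]
  have : (∑' n : ℕ, (((n + N : ℕ):ℂ)+1) ^ (-s)) = ∑' n : ℕ, ((n:ℂ) + (N:ℂ) + 1) ^ (-s) := by
    congr 1; funext n; push_cast; ring_nf
  rw [← this]; ring

lemma term_expand (m : ℕ) {z : ℂ} (hz : ‖z‖ < 2*π*((m:ℝ)+1)^2) :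
    HasSum (fun j : ℕ => (-1)^j * (z/(2*(π:ℂ)))^(j+1) * ((m:ℂ)+1) ^ (-(Sarg (j+1) z)))
      (((m:ℂ)+1) ^ (-(1/2:ℂ) - I*z) * (z / (2*(π:ℂ)*((m:ℂ)+1)^2 + z))) := by
  set b : ℂ := (m:ℂ)+1 with hb
  have hb0 : b ≠ 0 := by
    have : ((m+1 : ℕ) : ℂ) ≠ 0 := Nat.cast_ne_zero.mpr (Nat.succ_ne_zero m)
    rw [hb]; push_cast at this ⊢; exact this
  have hd0 : (2*(π:ℂ)*b^2 : ℂ) ≠ 0 := by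
    rw [hb]
    have : ((2*π*((m:ℝ)+1)^2 : ℝ) : ℂ) ≠ 0 := by
      exact_mod_cast (by positivity : (2*π*((m:ℝ)+1)^2 : ℝ) ≠ 0)
    intro h; apply this; rw [← h]; push_cast; ring
  have habs : ‖(2*(π:ℂ)*b^2)‖ = 2*π*((m:ℝ)+1)^2 := by
    rw [hb]
    have : (2*(π:ℂ)*((m:ℂ)+1)^2) = ((2*π*((m:ℝ)+1)^2 : ℝ) : ℂ) := by push_cast; ring
    rw [this, Complex.norm_real, Real.norm_of_nonneg (by positivity)]
  set w : ℂ := z / (2*(π:ℂ)*b^2) with hw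
  have hwlt : ‖-w‖ < 1 := by
    rw [norm_neg, hw, norm_div, habs]
    rw [div_lt_one (by positivity)]
    exact hz
  have hden : (2*(π:ℂ)*b^2 + z : ℂ) ≠ 0 := by
    intro h
    have : ‖z‖ = 2*π*((m:ℝ)+1)^2 := by
      have : z = -(2*(π:ℂ)*b^2) := by linear_combination h
      rw [this, norm_neg, habs]
    linarith
  have hgeom := (hasSum_geometric_of_norm_lt_one hwlt).mul_left (b ^ (-(1/2:ℂ) - I*z) * w)
  have hfun : (fun j : ℕ => b ^ (-(1/2:ℂ) - I*z) * w * (-w)^j)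
      = fun j : ℕ => (-1)^j * (z/(2*(π:ℂ)))^(j+1) * b ^ (-(Sarg (j+1) z)) := by
    funext j
    have hsplit : b ^ (-(Sarg (j+1) z)) = b ^ (-(1/2:ℂ) - I*z) * (b^2)⁻¹^(j+1) := by
      have h1 : -(Sarg (j+1) z) = (-(1/2:ℂ) - I*z) + (-(2*((j:ℂ)+1))) := by
        rw [Sarg]; push_cast; ring
      rw [h1, Complex.cpow_add _ _ hb0]
      congr 1
      have h2 : (-(2*((j:ℂ)+1))) = -(((2*(j+1) : ℕ) : ℂ)) := by push_cast; ring
      rw [h2, Complex.cpow_neg, Complex.cpow_natCast, pow_mul, ← inv_pow]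
    rw [hsplit, hw, neg_pow]
    rw [div_pow, div_pow, mul_pow]
    field_simp
    ring_nf
    simp only [inv_pow, ← pow_mul]
    field_simp
  have hval : b ^ (-(1/2:ℂ) - I*z) * w * (1 - -w)⁻¹
      = b ^ (-(1/2:ℂ) - I*z) * (z / (2*(π:ℂ)*b^2 + z)) := by
    rw [sub_neg_eq_add, hw, mul_assoc]
    congr 1
    field_simp
  rw [hfun, hval] at hgeom
  exact hgeom

lemma Csum_nonneg : 0 ≤ Csum := tsum_nonneg (fun n => Real.rpow_nonneg (by positivity) _)

lemma tail_norm_bound (N : ℕ) {s : ℂ} (hs : (5/2:ℝ) ≤ s.re) :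
    ‖riemannZeta s - Ppart N s‖ ≤ Csum * ((N:ℝ)+1) ^ ((2:ℝ) - s.re) := by
  have hs1 : 1 < s.re := by linarith
  rw [zeta_sub_Ppart N hs1]
  have hcast : ∀ n : ℕ, ((n:ℂ) + (N:ℂ) + 1) = (((n + N : ℕ) : ℂ) + 1) := by
    intro n; push_cast; ring
  have hterm : ∀ n : ℕ, ‖((n:ℂ) + (N:ℂ) + 1) ^ (-s)‖
      ≤ ((n:ℝ)+1) ^ (-(2:ℝ)) * ((N:ℝ)+1) ^ ((2:ℝ) - s.re) := by
    intro n
    rw [hcast n, norm_cpow_nat]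
    have ha : ((n + N : ℕ) : ℝ) + 1 = (n:ℝ) + (N:ℝ) + 1 := by push_cast; ring
    rw [ha]
    set a : ℝ := (n:ℝ) + (N:ℝ) + 1 with hadef
    have ha0 : (0:ℝ) < a := by positivity
    have h1 : a ^ (-s.re) = a ^ (-(2:ℝ)) * a ^ ((2:ℝ) - s.re) := by
      rw [← Real.rpow_add ha0]; ring_nf
    rw [h1]
    have h2 : a ^ (-(2:ℝ)) ≤ ((n:ℝ)+1) ^ (-(2:ℝ)) :=
      Real.rpow_le_rpow_of_nonpos (by positivity) (by rw [hadef]; have := Nat.cast_nonneg (α := ℝ) N; linarith) (by norm_num)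
    have h3 : a ^ ((2:ℝ) - s.re) ≤ ((N:ℝ)+1) ^ ((2:ℝ) - s.re) :=
      Real.rpow_le_rpow_of_nonpos (by positivity) (by rw [hadef]; have := Nat.cast_nonneg (α := ℝ) n; linarith) (by linarith)
    exact mul_le_mul h2 h3 (Real.rpow_nonneg ha0.le _) (Real.rpow_nonneg (by positivity) _)
  have hsum2 : Summable (fun n : ℕ => ((n:ℝ)+1) ^ (-(2:ℝ)) * ((N:ℝ)+1) ^ ((2:ℝ) - s.re)) :=
    (summable_rpow_shift one_lt_two).mul_right _
  have hsum1 : Summable (fun n : ℕ => ‖((n:ℂ) + (N:ℂ) + 1) ^ (-s)‖) :=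
    Summable.of_nonneg_of_le (fun n => norm_nonneg _) hterm hsum2
  calc ‖∑' n : ℕ, ((n:ℂ) + (N:ℂ) + 1) ^ (-s)‖ ≤ ∑' n : ℕ, ‖((n:ℂ) + (N:ℂ) + 1) ^ (-s)‖ :=
        norm_tsum_le_tsum_norm hsum1
    _ ≤ ∑' n : ℕ, ((n:ℝ)+1) ^ (-(2:ℝ)) * ((N:ℝ)+1) ^ ((2:ℝ) - s.re) :=
        Summable.tsum_le_tsum hterm hsum1 hsum2
    _ = Csum * ((N:ℝ)+1) ^ ((2:ℝ) - s.re) := by rw [tsum_mul_right]; rfl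


lemma Tj_tail_bound {N j : ℕ} (hN : 1 ≤ N) {z : ℂ} (hz : ‖z‖ < (N:ℝ)^2)
    (hj : N^2 + 2 ≤ j) :
    ‖Tj N j z‖ ≤ (Csum * ((N:ℝ)+1) ^ (((N:ℝ)^2 + 2 : ℝ))) * (1/6:ℝ)^(j+1) := by
  have hNr : (1:ℝ) ≤ (N:ℝ) := by exact_mod_cast hN
  have him : z.im ≤ (N:ℝ)^2 :=
    le_trans (le_trans (le_abs_self _) (Complex.abs_im_le_norm z)) hz.le
  have hjr : ((N:ℝ)^2 + 2) ≤ (j:ℝ) := by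
    have : ((N^2 + 2 : ℕ) : ℝ) ≤ (j:ℝ) := by exact_mod_cast hj
    push_cast at this; linarith
  set σ : ℝ := (Sarg (j+1) z).re with hσdef
  have hσ : σ = 1/2 + 2*((j:ℝ)+1) - z.im := by rw [hσdef, Sarg_re]; push_cast; ring
  have hσ52 : (5/2:ℝ) ≤ σ := by rw [hσ]; nlinarith
  have hπ : (3:ℝ) < π := Real.pi_gt_three
  -- norm of Tj
  have hnorm : ‖Tj N j z‖ = (‖z‖ / (2*π))^(j+1)
      * ‖riemannZeta (Sarg (j+1) z) - Ppart N (Sarg (j+1) z)‖ := by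
    rw [Tj, norm_mul, norm_mul, norm_pow, norm_pow, norm_neg, norm_one, one_pow, one_mul]
    congr 2
    rw [norm_div]
    congr 1
    have : (2*(π:ℂ)) = ((2*π : ℝ) : ℂ) := by push_cast; ring
    rw [this, Complex.norm_real, Real.norm_of_nonneg (by positivity)]
  rw [hnorm]
  have hzeta := tail_norm_bound N (s := Sarg (j+1) z) (by rw [← hσdef] at *; exact hσ52)
  rw [← hσdef] at hzeta
  -- exponent bound
  have hexp : ((N:ℝ)+1) ^ ((2:ℝ) - σ) ≤ ((N:ℝ)+1) ^ (((N:ℝ)^2 + 2 : ℝ) - 2*((j:ℝ)+1)) := by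
    apply Real.rpow_le_rpow_of_exponent_le (by linarith)
    rw [hσ]; linarith
  have hsplit : ((N:ℝ)+1) ^ (((N:ℝ)^2 + 2 : ℝ) - 2*((j:ℝ)+1))
      = ((N:ℝ)+1) ^ (((N:ℝ)^2 + 2 : ℝ)) * (((N:ℝ)+1) ^ (-(2:ℝ)))^(j+1) := by
    rw [← Real.rpow_natCast (((N:ℝ)+1) ^ (-(2:ℝ))) (j+1), ← Real.rpow_mul (by positivity),
      ← Real.rpow_add (by positivity)]
    push_cast; ring_nf
  have hratio : (‖z‖ / (2*π)) * ((N:ℝ)+1) ^ (-(2:ℝ)) ≤ 1/6 := by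
    have h1 : ((N:ℝ)+1) ^ (-(2:ℝ)) = 1/((N:ℝ)+1)^2 := by
      rw [Real.rpow_neg (by positivity), one_div]
      norm_num [Real.rpow_natCast ((N:ℝ)+1) 2]
    rw [h1]
    have h2 : ‖z‖ / (2*π) ≤ (N:ℝ)^2 / 6 := by
      apply div_le_div₀ (by positivity) hz.le (by norm_num) (by linarith)
    calc ‖z‖ / (2*π) * (1/((N:ℝ)+1)^2) ≤ (N:ℝ)^2/6 * (1/((N:ℝ)+1)^2) := by
          apply mul_le_mul_of_nonneg_right h2 (by positivity)
      _ ≤ 1/6 := by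
          rw [div_mul_eq_mul_div, mul_one_div, div_div]
          rw [div_le_div_iff₀ (by positivity) (by norm_num)]
          nlinarith
  have habs0 : 0 ≤ ‖z‖ / (2*π) := by positivity
  calc (‖z‖ / (2*π))^(j+1) * ‖riemannZeta (Sarg (j+1) z) - Ppart N (Sarg (j+1) z)‖
      ≤ (‖z‖ / (2*π))^(j+1) * (Csum * ((N:ℝ)+1) ^ ((2:ℝ) - σ)) := by
        apply mul_le_mul_of_nonneg_left hzeta (by positivity)
    _ ≤ (‖z‖ / (2*π))^(j+1) * (Csum * (((N:ℝ)+1) ^ (((N:ℝ)^2 + 2 : ℝ)) * (((N:ℝ)+1) ^ (-(2:ℝ)))^(j+1))) := by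
        apply mul_le_mul_of_nonneg_left _ (by positivity)
        rw [← hsplit]
        exact mul_le_mul_of_nonneg_left hexp Csum_nonneg
    _ = (Csum * ((N:ℝ)+1) ^ (((N:ℝ)^2 + 2 : ℝ))) * ((‖z‖ / (2*π)) * ((N:ℝ)+1) ^ (-(2:ℝ)))^(j+1) := by
        rw [mul_pow]; ring
    _ ≤ (Csum * ((N:ℝ)+1) ^ (((N:ℝ)^2 + 2 : ℝ))) * (1/6:ℝ)^(j+1) := by
        apply mul_le_mul_of_nonneg_left _ (mul_nonneg Csum_nonneg (Real.rpow_nonneg (by positivity) _))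
        apply pow_le_pow_left₀ (by positivity) hratio

noncomputable def tailN (N : ℕ) (z : ℂ) : ℂ := ∑' j : ℕ, Tj N (j + (N^2+2)) z

/-- summable geometric bound for the tail -/
lemma u_summable (N : ℕ) : Summable (fun j : ℕ =>
    (Csum * ((N:ℝ)+1) ^ (((N:ℝ)^2 + 2 : ℝ))) * (1/6:ℝ)^(j + (N^2+2) + 1)) := by
  have : ∀ j : ℕ, (Csum * ((N:ℝ)+1) ^ (((N:ℝ)^2 + 2 : ℝ))) * (1/6:ℝ)^(j + (N^2+2) + 1)
      = ((Csum * ((N:ℝ)+1) ^ (((N:ℝ)^2 + 2 : ℝ))) * (1/6:ℝ)^((N^2+2) + 1)) * (1/6:ℝ)^j := by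
    intro j
    rw [show j + (N^2+2) + 1 = ((N^2+2)+1) + j by ring, pow_add]
    ring
  refine Summable.congr ?_ (fun j => (this j).symm)
  exact (summable_geometric_of_lt_one (by norm_num) (by norm_num)).mul_left _

lemma Tj_bound_shifted {N : ℕ} (hN : 1 ≤ N) {z : ℂ} (hz : ‖z‖ < (N:ℝ)^2) (j : ℕ) :
    ‖Tj N (j + (N^2+2)) z‖
      ≤ (Csum * ((N:ℝ)+1) ^ (((N:ℝ)^2 + 2 : ℝ))) * (1/6:ℝ)^(j + (N^2+2) + 1) :=
  Tj_tail_bound hN hz (by omega)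

lemma Tj_summable {N : ℕ} (hN : 1 ≤ N) {z : ℂ} (hz : ‖z‖ < (N:ℝ)^2) :
    Summable (fun j : ℕ => Tj N j z) := by
  rw [← summable_nat_add_iff (N^2+2)]
  refine Summable.of_norm (Summable.of_nonneg_of_le (fun j => norm_nonneg _)
    (fun j => Tj_bound_shifted hN hz j) (u_summable N))

lemma GN_split {N : ℕ} (hN : 1 ≤ N) {z : ℂ} (hz : ‖z‖ < (N:ℝ)^2) :
    GN N z = FN N z + ((∑ j ∈ Finset.range (N^2+2), Tj N j z) + tailN N z) := by
  rw [GN, ← Summable.sum_add_tsum_nat_add (N^2+2) (Tj_summable hN hz)]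
  rfl

lemma diff_Sarg (j : ℕ) : Differentiable ℂ (Sarg j) := by
  unfold Sarg
  exact (differentiable_const _).add ((differentiable_const _).mul differentiable_id)

lemma diff_const_cpow (m : ℕ) : Differentiable ℂ (fun s : ℂ => ((m:ℂ)+1) ^ (-s)) := by
  have hb : ((m:ℂ)+1) ≠ 0 := by
    have : ((m+1 : ℕ) : ℂ) ≠ 0 := Nat.cast_ne_zero.mpr (Nat.succ_ne_zero m)
    push_cast at this; exact this
  exact fun x => (differentiable_id.neg x).const_cpow (Or.inl hb)

lemma diff_Ppart (N : ℕ) : Differentiable ℂ (Ppart N) := by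
  unfold Ppart
  exact Differentiable.fun_sum (fun n _ => diff_const_cpow n)

lemma Sarg_ne_one {j : ℕ} {z : ℂ} (h : (1:ℝ) < (Sarg j z).re) : Sarg j z ≠ 1 := by
  intro hh; rw [hh] at h; simp at h

lemma diffAt_Tj {N j : ℕ} {z : ℂ} (h1 : Sarg (j+1) z ≠ 1) :
    DifferentiableAt ℂ (Tj N j) z := by
  unfold Tj
  refine DifferentiableAt.mul (DifferentiableAt.mul (differentiableAt_const _) ?_) ?_
  · exact ((differentiableAt_id.div_const _).pow _)
  · refine DifferentiableAt.sub ?_ ?_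
    · exact (differentiableAt_riemannZeta h1).comp z (diff_Sarg (j+1) z)
    · exact ((diff_Ppart N).comp (diff_Sarg (j+1))) z

lemma Sarg_re_big {N j : ℕ} {z : ℂ} (hz : ‖z‖ < (N:ℝ)^2) (hj : N^2+2 ≤ j) :
    (5/2 : ℝ) ≤ (Sarg (j+1) z).re := by
  have him : z.im ≤ (N:ℝ)^2 :=
    le_trans (le_trans (le_abs_self _) (Complex.abs_im_le_norm z)) hz.le
  have hjr : ((N:ℝ)^2 + 2) ≤ (j:ℝ) := by
    have : ((N^2 + 2 : ℕ) : ℝ) ≤ (j:ℝ) := by exact_mod_cast hj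
    push_cast at this; linarith
  rw [Sarg_re]; push_cast; nlinarith

lemma tail_diffOn {N : ℕ} (hN : 1 ≤ N) :
    DifferentiableOn ℂ (tailN N) (Metric.ball (0:ℂ) ((N:ℝ)^2)) := by
  unfold tailN
  refine Complex.differentiableOn_tsum_of_summable_norm (u_summable N) ?_ Metric.isOpen_ball ?_
  · intro j
    intro z hz
    rw [mem_ball_zero_iff] at hz
    refine (diffAt_Tj ?_).differentiableWithinAt
    exact Sarg_ne_one (by have := Sarg_re_big (N := N) hz (j := j + (N^2+2)) (by omega); linarith)
  · intro j w hw
    rw [mem_ball_zero_iff] at hw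
    exact Tj_bound_shifted hN hw j

lemma two_pi_bound (N : ℕ) : ((N:ℝ))^2 ≤ 2*π*((N:ℝ)+1)^2 := by
  have hπ : (3:ℝ) < π := Real.pi_gt_three
  nlinarith [sq_nonneg ((N:ℝ)+1), sq_nonneg (N:ℝ), Nat.cast_nonneg (α := ℝ) N]

lemma GN_succ {N : ℕ} (hN : 1 ≤ N) {z : ℂ} (hz : ‖z‖ < (N:ℝ)^2) :
    GN (N+1) z = GN N z := by
  have hz' : ‖z‖ < (((N+1):ℕ):ℝ)^2 := by
    push_cast
    have : ((N:ℝ))^2 ≤ ((N:ℝ)+1)^2 := by nlinarith [Nat.cast_nonneg (α := ℝ) N]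
    linarith
  have hS1 := Tj_summable hN hz
  have hS2 := Tj_summable (Nat.le_succ_of_le hN) hz'
  have hexp := term_expand N (z := z) (lt_of_lt_of_le hz (two_pi_bound N))
  have hdiff : (fun j : ℕ => Tj (N+1) j z) = fun j => Tj N j z -
      ((-1)^j * (z/(2*(π:ℂ)))^(j+1) * ((N:ℂ)+1) ^ (-(Sarg (j+1) z))) := by
    funext j
    unfold Tj Ppart
    rw [Finset.sum_range_succ]
    ring
  have hFN : FN (N+1) z = FN N z +
      ((N:ℂ)+1) ^ (-(1/2:ℂ) - I*z) * (z / (2*(π:ℂ)*((N:ℂ)+1)^2 + z)) := by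
    unfold FN
    rw [Finset.sum_range_succ]
  have htsum : ∑' j : ℕ, Tj (N+1) j z = (∑' j : ℕ, Tj N j z) -
      ((N:ℂ)+1) ^ (-(1/2:ℂ) - I*z) * (z / (2*(π:ℂ)*((N:ℂ)+1)^2 + z)) := by
    rw [hdiff, Summable.tsum_sub hS1 hexp.summable, hexp.tsum_eq]
  rw [GN, GN, hFN, htsum]
  ring

lemma GN_chain {N M : ℕ} (hN : 1 ≤ N) (hNM : N ≤ M) {z : ℂ}
    (hz : ‖z‖ < (N:ℝ)^2) : GN M z = GN N z := by
  induction M, hNM using Nat.le_induction with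
  | base => rfl
  | succ m hm ih =>
      rw [← ih]
      refine GN_succ (le_trans hN hm) (lt_of_lt_of_le hz ?_)
      have : ((N:ℝ)) ≤ (m:ℝ) := by exact_mod_cast hm
      have h0 : (0:ℝ) ≤ (N:ℝ) := Nat.cast_nonneg N
      nlinarith

lemma analyticAt_zeta_aux :
    AnalyticAt ℂ (Function.update (fun s : ℂ => (s-1) * riemannZeta s) 1 1) 1 := by
  apply Complex.analyticAt_of_differentiable_on_punctured_nhds_of_continuousAt
  · filter_upwards [self_mem_nhdsWithin] with s hs
    have hs' : s ≠ 1 := hs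
    have hd : DifferentiableAt ℂ (fun s : ℂ => (s-1) * riemannZeta s) s :=
      (differentiableAt_id.sub (differentiableAt_const _)).mul (differentiableAt_riemannZeta hs')
    refine hd.congr_of_eventuallyEq ?_
    filter_upwards [isOpen_compl_singleton.mem_nhds (by simpa using hs')] with x hx
    exact Function.update_of_ne hx _ _
  · rw [continuousAt_update_same]
    exact riemannZeta_residue_one

lemma analyticAt_Sarg (j : ℕ) (z₀ : ℂ) : AnalyticAt ℂ (Sarg j) z₀ := by
  unfold Sarg
  exact analyticAt_const.add (analyticAt_const.mul analyticAt_id)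

lemma mero_zeta_Sarg (j : ℕ) (z₀ : ℂ) :
    MeromorphicAt (fun z => riemannZeta (Sarg j z)) z₀ := by
  by_cases h : Sarg j z₀ = 1
  · refine ⟨2, ?_⟩
    set g := Function.update (fun s : ℂ => (s-1) * riemannZeta s) 1 1 with hg
    have hkey : ∀ z : ℂ, Sarg j z - 1 = I * (z - z₀) := by
      intro z
      have : Sarg j z - Sarg j z₀ = I * (z - z₀) := by unfold Sarg; ring
      rw [← this, h]
    have heq : (fun z : ℂ => (z - z₀)^2 • riemannZeta (Sarg j z))
        = fun z => (-I) * ((z - z₀) * g (Sarg j z)) := by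
      funext z
      rcases eq_or_ne z z₀ with rfl | hz
      · simp
      · have hne : Sarg j z ≠ 1 := by
          intro hc
          apply hz
          have := hkey z
          rw [hc, sub_self] at this
          have := (mul_eq_zero.mp this.symm).resolve_left I_ne_zero
          exact sub_eq_zero.mp this
        have : g (Sarg j z) = (Sarg j z - 1) * riemannZeta (Sarg j z) :=
          Function.update_of_ne hne _ _
        rw [this, hkey z, smul_eq_mul]
        ring_nf
        rw [I_sq]
        ring
    rw [heq]
    refine analyticAt_const.mul ((analyticAt_id.sub analyticAt_const).mul ?_)
    have hz1 : AnalyticAt ℂ (Function.update (fun s : ℂ => (s-1) * riemannZeta s) 1 1)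
        (Sarg j z₀) := by rw [h]; exact analyticAt_zeta_aux
    exact hz1.comp (analyticAt_Sarg j z₀)
  · -- analytic case
    refine AnalyticAt.meromorphicAt ?_
    rw [Complex.analyticAt_iff_eventually_differentiableAt]
    have hcont : ContinuousAt (Sarg j) z₀ := ((diff_Sarg j).continuous).continuousAt
    filter_upwards [hcont.preimage_mem_nhds (isOpen_compl_singleton.mem_nhds h)] with z hz
    exact (differentiableAt_riemannZeta hz).comp z (diff_Sarg j z)

lemma anal_zeta_Sarg {j : ℕ} {z₀ : ℂ} (h : Sarg j z₀ ≠ 1) :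
    AnalyticAt ℂ (fun z => riemannZeta (Sarg j z)) z₀ := by
  rw [Complex.analyticAt_iff_eventually_differentiableAt]
  have hcont : ContinuousAt (Sarg j) z₀ := ((diff_Sarg j).continuous).continuousAt
  filter_upwards [hcont.preimage_mem_nhds (isOpen_compl_singleton.mem_nhds h)] with z hz
  exact (differentiableAt_riemannZeta hz).comp z (diff_Sarg j z)

lemma anal_Ppart_Sarg (N j : ℕ) (z₀ : ℂ) :
    AnalyticAt ℂ (fun z => Ppart N (Sarg (j+1) z)) z₀ := by
  rw [Complex.analyticAt_iff_eventually_differentiableAt]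
  exact Eventually.of_forall fun z => ((diff_Ppart N).comp (diff_Sarg (j+1))) z

lemma anal_pow_fac (j : ℕ) (z₀ : ℂ) :
    AnalyticAt ℂ (fun z : ℂ => (-1:ℂ)^j * (z/(2*(π:ℂ)))^(j+1)) z₀ :=
  analyticAt_const.mul ((analyticAt_id.div analyticAt_const (by
    intro hc
    have h2 : (2*π:ℝ) ≠ 0 := by positivity
    exact h2 (by exact_mod_cast (show ((2*π:ℝ):ℂ) = 0 by push_cast; linear_combination hc)))).pow _)

lemma mero_Tj (N j : ℕ) (z₀ : ℂ) : MeromorphicAt (Tj N j) z₀ := by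
  have h1 := (anal_pow_fac j z₀).meromorphicAt
  have h2 := mero_zeta_Sarg (j+1) z₀
  have h3 := (anal_Ppart_Sarg N j z₀).meromorphicAt
  exact h1.mul (h2.sub h3)

lemma anal_Tj {N j : ℕ} {z₀ : ℂ} (h : Sarg (j+1) z₀ ≠ 1) :
    AnalyticAt ℂ (Tj N j) z₀ :=
  (anal_pow_fac j z₀).mul ((anal_zeta_Sarg h).sub (anal_Ppart_Sarg N j z₀))

lemma mero_finsetSum {ι : Type*} (s : Finset ι) (f : ι → ℂ → ℂ) (x : ℂ)
    (h : ∀ i ∈ s, MeromorphicAt (f i) x) :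
    MeromorphicAt (fun z => ∑ i ∈ s, f i z) x := by
  classical
  induction s using Finset.induction_on with
  | empty => simpa using MeromorphicAt.const (0:ℂ) x
  | @insert a s ha ih =>
      simp_rw [Finset.sum_insert ha]
      exact (h a (Finset.mem_insert_self a s)).add
        (ih fun i hi => h i (Finset.mem_insert_of_mem hi))

lemma anal_cpow_half (n : ℕ) (z₀ : ℂ) :
    AnalyticAt ℂ (fun z : ℂ => ((n:ℂ)+1) ^ (-(1/2:ℂ) - I*z)) z₀ := by
  have hb : ((n:ℂ)+1) ≠ 0 := by
    have : ((n+1 : ℕ) : ℂ) ≠ 0 := Nat.cast_ne_zero.mpr (Nat.succ_ne_zero n)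
    push_cast at this; exact this
  rw [Complex.analyticAt_iff_eventually_differentiableAt]
  refine Eventually.of_forall fun z => DifferentiableAt.const_cpow ?_ (Or.inl hb)
  exact (differentiableAt_const _).sub ((differentiableAt_const _).mul differentiableAt_id)

lemma anal_denom (n : ℕ) (z₀ : ℂ) :
    AnalyticAt ℂ (fun z : ℂ => 2*(π:ℂ)*((n:ℂ)+1)^2 + z) z₀ :=
  analyticAt_const.add analyticAt_id

lemma mero_FN (N : ℕ) (z₀ : ℂ) : MeromorphicAt (FN N) z₀ := by
  unfold FN
  refine mero_finsetSum _ _ _ fun n _ => ?_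
  exact (anal_cpow_half n z₀).meromorphicAt.mul
    ((analyticAt_id.meromorphicAt).div (anal_denom n z₀).meromorphicAt)

lemma anal_FN {N : ℕ} {z₀ : ℂ}
    (hden : ∀ n : ℕ, 2*(π:ℂ)*((n:ℂ)+1)^2 + z₀ ≠ 0) :
    AnalyticAt ℂ (FN N) z₀ := by
  unfold FN
  refine Finset.analyticAt_fun_sum _ fun n _ => ?_
  exact (anal_cpow_half n z₀).mul (analyticAt_id.div (anal_denom n z₀) (hden n))

lemma anal_tailN {N : ℕ} (hN : 1 ≤ N) {z₀ : ℂ} (hz : ‖z₀‖ < (N:ℝ)^2) :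
    AnalyticAt ℂ (tailN N) z₀ :=
  (tail_diffOn hN).analyticAt
    (Metric.isOpen_ball.mem_nhds (by rwa [mem_ball_zero_iff]))

lemma GN_eventuallyEq_split {N : ℕ} (hN : 1 ≤ N) {z₀ : ℂ} (hz : ‖z₀‖ < (N:ℝ)^2) :
    (fun z => FN N z + ((∑ j ∈ Finset.range (N^2+2), Tj N j z) + tailN N z)) =ᶠ[𝓝 z₀] GN N := by
  have hmem : z₀ ∈ Metric.ball (0:ℂ) ((N:ℝ)^2) := by rwa [mem_ball_zero_iff]
  filter_upwards [Metric.isOpen_ball.mem_nhds hmem] with z hzz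
  rw [mem_ball_zero_iff] at hzz
  exact (GN_split hN hzz).symm

lemma mero_GN {N : ℕ} (hN : 1 ≤ N) {z₀ : ℂ} (hz : ‖z₀‖ < (N:ℝ)^2) :
    MeromorphicAt (GN N) z₀ := by
  have hf : MeromorphicAt
      (fun z => FN N z + ((∑ j ∈ Finset.range (N^2+2), Tj N j z) + tailN N z)) z₀ := by
    refine (mero_FN N z₀).add (MeromorphicAt.add ?_ (anal_tailN hN hz).meromorphicAt)
    exact mero_finsetSum _ _ _ fun j _ => mero_Tj N j z₀
  exact hf.congr ((GN_eventuallyEq_split hN hz).filter_mono nhdsWithin_le_nhds)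

lemma anal_GN {N : ℕ} (hN : 1 ≤ N) {z₀ : ℂ} (hz : ‖z₀‖ < (N:ℝ)^2)
    (hden : ∀ n : ℕ, 2*(π:ℂ)*((n:ℂ)+1)^2 + z₀ ≠ 0)
    (hS : ∀ j : ℕ, Sarg (j+1) z₀ ≠ 1) :
    AnalyticAt ℂ (GN N) z₀ := by
  have hf : AnalyticAt ℂ
      (fun z => FN N z + ((∑ j ∈ Finset.range (N^2+2), Tj N j z) + tailN N z)) z₀ := by
    refine (anal_FN hden).add (AnalyticAt.add ?_ (anal_tailN hN hz))
    exact Finset.analyticAt_fun_sum _ fun j _ => anal_Tj (hS j)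
  exact hf.congr (GN_eventuallyEq_split hN hz)

lemma K_lt (z : ℂ) : ‖z‖ < ((⌈‖z‖⌉₊ + 1 : ℕ):ℝ)^2 := by
  have h1 : ‖z‖ ≤ (⌈‖z‖⌉₊ : ℝ) := Nat.le_ceil _
  have h2 : ((⌈‖z‖⌉₊ : ℝ)) < ((⌈‖z‖⌉₊ + 1 : ℕ):ℝ) := by
    push_cast; linarith
  have h3 : ((⌈‖z‖⌉₊ + 1 : ℕ):ℝ) ≤ ((⌈‖z‖⌉₊ + 1 : ℕ):ℝ)^2 := by
    have h0 : (0:ℝ) ≤ (⌈‖z‖⌉₊:ℝ) := Nat.cast_nonneg _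
    have : (1:ℝ) ≤ ((⌈‖z‖⌉₊ + 1 : ℕ):ℝ) := by push_cast; linarith
    nlinarith
  linarith

lemma Gc_eventuallyEq (z₀ : ℂ) : Gc =ᶠ[𝓝 z₀] GN (⌈‖z₀‖⌉₊ + 2) := by
  set M : ℕ := ⌈‖z₀‖⌉₊ + 2 with hM
  filter_upwards [Metric.ball_mem_nhds z₀ (by norm_num : (0:ℝ) < 1/2)] with z hz
  rw [Metric.mem_ball] at hz
  have habs : ‖z‖ < ‖z₀‖ + 1/2 := by
    have := norm_sub_le z z₀
    calc ‖z‖ ≤ ‖(z - z₀)‖ + ‖z₀‖ := by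
          simpa using norm_add_le (z - z₀) z₀
      _ < ‖z₀‖ + 1/2 := by
          rw [Complex.dist_eq] at hz; linarith
  have hK : ⌈‖z‖⌉₊ + 1 ≤ M := by
    rw [hM]
    have : ⌈‖z‖⌉₊ ≤ ⌈‖z₀‖⌉₊ + 1 := by
      apply Nat.ceil_le.mpr
      have := Nat.le_ceil (‖z₀‖)
      push_cast
      linarith
    omega
  rw [Gc]
  exact (GN_chain (by omega) hK (K_lt z)).symm

lemma abs_lt_M (z₀ : ℂ) : ‖z₀‖ < ((⌈‖z₀‖⌉₊ + 2 : ℕ):ℝ)^2 := by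
  refine lt_of_lt_of_le (K_lt z₀) ?_
  have : ((⌈‖z₀‖⌉₊ + 1 : ℕ):ℝ) ≤ ((⌈‖z₀‖⌉₊ + 2 : ℕ):ℝ) := by
    push_cast; linarith
  have h0 : (0:ℝ) ≤ ((⌈‖z₀‖⌉₊ + 1 : ℕ):ℝ) := by positivity
  nlinarith

lemma mero_Gc (z₀ : ℂ) : MeromorphicAt Gc z₀ :=
  (mero_GN (by omega) (abs_lt_M z₀)).congr
    (((Gc_eventuallyEq z₀).symm).filter_mono nhdsWithin_le_nhds)

lemma anal_Gc {z₀ : ℂ} (h : z₀ ∉ GPoles) : AnalyticAt ℂ Gc z₀ := by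
  have hden : ∀ n : ℕ, 2*(π:ℂ)*((n:ℂ)+1)^2 + z₀ ≠ 0 := by
    intro n hc
    apply h
    right
    refine ⟨n+1, by omega, ?_⟩
    push_cast
    linear_combination hc
  have hS : ∀ j : ℕ, Sarg (j+1) z₀ ≠ 1 := by
    intro j hc
    apply h
    left
    refine ⟨j+1, by omega, ?_⟩
    rw [Sarg] at hc
    have h1 : I * z₀ = 1 - 1/2 - 2*((j:ℂ)+1) := by push_cast at hc ⊢; linear_combination hc
    have h2 : z₀ = -I * (I * z₀) := by
      rw [show -I * (I*z₀) = -(I*I)*z₀ by ring, Complex.I_mul_I]; ring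
    rw [h2, h1]
    push_cast
    ring
  exact (anal_GN (by omega) (abs_lt_M z₀) hden hS).congr (Gc_eventuallyEq z₀).symm

set_option maxHeartbeats 2000000 in
lemma Gc_real (t : ℝ) :
    Gc t = ∑' n : ℕ, ((n : ℂ) + 1) ^ (-(1 / 2 : ℂ) - I * t) *
      ((t : ℂ) / (2 * π * ((n : ℂ) + 1) ^ 2 + t)) := by
  classical
  set M : ℕ := ⌈‖(t:ℂ)‖⌉₊ + 1 with hM
  set a : ℕ → ℂ := fun n => ((n : ℂ) + 1) ^ (-(1 / 2 : ℂ) - I * (t:ℂ)) *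
      ((t : ℂ) / (2 * (π:ℂ) * ((n : ℂ) + 1) ^ 2 + (t:ℂ))) with ha
  set b : ℕ → ℕ → ℂ := fun n j => (-1)^j * ((t:ℂ)/(2*(π:ℂ)))^(j+1) *
      ((((n+M : ℕ)):ℂ)+1) ^ (-(Sarg (j+1) (t:ℂ))) with hb
  have htM : ‖(t:ℂ)‖ < ((M:ℕ):ℝ)^2 := K_lt (t:ℂ)
  have hM1 : (1:ℝ) ≤ (M:ℝ) := by
    have : (1:ℕ) ≤ M := by omega
    exact_mod_cast this
  -- expansion of each term with index ≥ M
  have h1 : ∀ n : ℕ, HasSum (fun j => b n j) (a (n+M)) := by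
    intro n
    have hlt : ‖(t:ℂ)‖ < 2*π*(((n+M:ℕ):ℝ)+1)^2 := by
      refine lt_of_lt_of_le htM (le_trans ?_ (two_pi_bound (n+M)))
      have h0 : ((M:ℕ):ℝ) ≤ ((n+M:ℕ):ℝ) := by push_cast; linarith [Nat.cast_nonneg (α := ℝ) n]
      have h0' : (0:ℝ) ≤ ((M:ℕ):ℝ) := by positivity
      push_cast at *
      nlinarith
    exact term_expand (n+M) hlt
  -- re of Sarg at real t
  have hre : ∀ j : ℕ, (Sarg (j+1) (t:ℂ)).re = 1/2 + 2*((j:ℝ)+1) := by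
    intro j
    rw [Sarg_re, Complex.ofReal_im]
    push_cast; ring
  -- norm of b
  have hnb : ∀ n j : ℕ, ‖b n j‖ ≤
      ((‖(t:ℂ)‖/(2*π)) * ((n:ℝ)+1) ^ (-(2:ℝ))) * (1/6:ℝ)^j := by
    intro n j
    have e1 : ‖((t:ℂ)/(2*(π:ℂ)))‖ = ‖(t:ℂ)‖/(2*π) := by
      rw [norm_div]
      congr 1
      have : (2*(π:ℂ)) = ((2*π : ℝ) : ℂ) := by push_cast; ring
      rw [this, Complex.norm_real, Real.norm_of_nonneg (by positivity)]
    have hnorm : ‖b n j‖ = (‖(t:ℂ)‖/(2*π))^(j+1)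
        * (((n+M:ℕ):ℝ)+1) ^ (-(Sarg (j+1) (t:ℂ)).re) := by
      rw [hb]
      rw [norm_mul, norm_mul, norm_pow, norm_pow, norm_neg, norm_one, one_pow, one_mul,
        e1, norm_cpow_nat (n+M) _]
    rw [hnorm, hre j]
    set A : ℝ := ((n+M:ℕ):ℝ)+1 with hA
    have hA1 : (1:ℝ) ≤ A := by
      rw [hA]; push_cast; linarith [Nat.cast_nonneg (α := ℝ) n, Nat.cast_nonneg (α := ℝ) M]
    have hstep : A ^ (-(1/2 + 2*((j:ℝ)+1))) ≤ (A ^ (-(2:ℝ)))^(j+1) := by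
      rw [← Real.rpow_natCast (A ^ (-(2:ℝ))) (j+1), ← Real.rpow_mul (by linarith)]
      apply Real.rpow_le_rpow_of_exponent_le hA1
      push_cast; linarith
    have hAn : ((n:ℝ)+1) ≤ A := by rw [hA]; push_cast; linarith [Nat.cast_nonneg (α := ℝ) M]
    have hAM : ((M:ℕ):ℝ) ≤ A := by rw [hA]; push_cast; linarith [Nat.cast_nonneg (α := ℝ) n]
    have hπ : (3:ℝ) < π := Real.pi_gt_three
    have hρle : (‖(t:ℂ)‖/(2*π)) * A ^ (-(2:ℝ)) ≤ 1/6 := by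
      have hA2 : A ^ (-(2:ℝ)) = 1/A^2 := by
        rw [Real.rpow_neg (by linarith), one_div]
        norm_num [Real.rpow_natCast A 2]
      rw [hA2]
      have htA : ‖(t:ℂ)‖ ≤ A^2 := by nlinarith [htM]
      rw [div_mul_eq_mul_div, mul_one_div, div_div]
      rw [div_le_div_iff₀ (by positivity) (by norm_num)]
      nlinarith [norm_nonneg (t:ℂ)]
    have hρle2 : (‖(t:ℂ)‖/(2*π)) * A ^ (-(2:ℝ))
        ≤ (‖(t:ℂ)‖/(2*π)) * ((n:ℝ)+1) ^ (-(2:ℝ)) := by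
      apply mul_le_mul_of_nonneg_left _ (by positivity)
      exact Real.rpow_le_rpow_of_nonpos (by positivity) hAn (by norm_num)
    have hρ0 : (0:ℝ) ≤ (‖(t:ℂ)‖/(2*π)) * A ^ (-(2:ℝ)) := by
      have := Real.rpow_nonneg (x := A) (by linarith) (-(2:ℝ))
      positivity
    calc (‖(t:ℂ)‖/(2*π))^(j+1) * A ^ (-(1/2 + 2*((j:ℝ)+1)))
        ≤ (‖(t:ℂ)‖/(2*π))^(j+1) * (A ^ (-(2:ℝ)))^(j+1) := by
          apply mul_le_mul_of_nonneg_left hstep (by positivity)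
      _ = ((‖(t:ℂ)‖/(2*π)) * A ^ (-(2:ℝ)))^(j+1) := by rw [mul_pow]
      _ = ((‖(t:ℂ)‖/(2*π)) * A ^ (-(2:ℝ))) *
            ((‖(t:ℂ)‖/(2*π)) * A ^ (-(2:ℝ)))^j := by rw [pow_succ]; ring
      _ ≤ ((‖(t:ℂ)‖/(2*π)) * ((n:ℝ)+1) ^ (-(2:ℝ))) * (1/6:ℝ)^j := by
          apply mul_le_mul hρle2 (pow_le_pow_left₀ hρ0 hρle j) (pow_nonneg hρ0 j)
          positivity
  -- summability of the double family
  have h2 : Summable (Function.uncurry b) := by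
    apply Summable.of_norm
    have hfg : Summable (fun p : ℕ × ℕ =>
        ((‖(t:ℂ)‖/(2*π)) * ((p.1:ℝ)+1) ^ (-(2:ℝ))) * (1/6:ℝ)^p.2) :=
      Summable.mul_of_nonneg ((summable_rpow_shift one_lt_two).mul_left _)
        (summable_geometric_of_lt_one (by norm_num) (by norm_num))
        (fun n => by positivity) (fun j => by positivity)
    exact Summable.of_nonneg_of_le (fun p => norm_nonneg _)
      (fun p => hnb p.1 p.2) hfg
  -- inner sums over n
  have h4 : ∀ j : ℕ, ∑' n : ℕ, b n j = Tj M j (t:ℂ) := by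
    intro j
    have hsre : 1 < (Sarg (j+1) (t:ℂ)).re := by rw [hre j]; push_cast; linarith [Nat.cast_nonneg (α := ℝ) j]
    have : ∑' n : ℕ, b n j = ((-1:ℂ))^j * ((t:ℂ)/(2*(π:ℂ)))^(j+1) *
        ∑' n : ℕ, ((n:ℂ) + (M:ℂ) + 1) ^ (-(Sarg (j+1) (t:ℂ))) := by
      rw [← tsum_mul_left]
      congr 1; funext n
      rw [hb]
      push_cast
      ring_nf
    rw [this, ← zeta_sub_Ppart M hsre, Tj]
  -- swap
  have h3 : ∑' n : ℕ, ∑' j : ℕ, b n j = ∑' j : ℕ, ∑' n : ℕ, b n j := (Summable.tsum_comm h2).symm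
  -- summability of a (· + M)
  have h5 : Summable (fun n : ℕ => a (n+M)) := by
    have := h2.prod
    refine this.congr fun n => ?_
    exact (h1 n).tsum_eq
  have h6 : Summable a := (summable_nat_add_iff M).mp h5
  -- conclude
  have hGN : Gc (t:ℂ) = GN M (t:ℂ) := by rw [Gc]
  rw [hGN, GN]
  have hFN : FN M (t:ℂ) = ∑ n ∈ Finset.range M, a n := rfl
  have hTsum : ∑' j : ℕ, Tj M j (t:ℂ) = ∑' n : ℕ, a (n+M) := by
    rw [tsum_congr (fun j => (h4 j).symm), ← h3, tsum_congr (fun n => (h1 n).tsum_eq)]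
  rw [hFN, hTsum, Summable.sum_add_tsum_nat_add M h6]

/-- The function `G(t) = ∑_{n≥1} n^{-1/2-it} t/(2πn²+t)` extends to a meromorphic
function on `ℂ` whose poles are contained in
`{(2k-1/2)i : k ≥ 1} ∪ {-2πn² : n ≥ 1}`. -/
theorem G_meromorphic_continuation :
    ∃ G : ℂ → ℂ,
      (∀ z : ℂ, MeromorphicAt G z) ∧
      (∀ z : ℂ, z ∉ GPoles → AnalyticAt ℂ G z) ∧
      (∀ t : ℝ, (∀ n : ℕ, 2 * π * ((n : ℝ) + 1) ^ 2 + t ≠ 0) →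
        G t = ∑' n : ℕ, ((n : ℂ) + 1) ^ (-(1 / 2 : ℂ) - I * t) *
          ((t : ℂ) / (2 * π * ((n : ℂ) + 1) ^ 2 + t))) :=
  ⟨Gc, fun z => mero_Gc z, fun z hz => anal_Gc hz, fun t _ => Gc_real t⟩
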